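/- Let p ≥ 2 and q ≥ 2, and let {A, B} be a balanced cut of the Hsu-grid HG_{p,q} (i.e., both |A| and |B| are at least pq/3). Then either the cut-rank of A over GF(2) is at least ⌊p/4⌋, or there is an induced matching of size ⌊q/6⌋ across the cut {A,B}: distinct vertices x_1,…,x_m ∈ A and y_1,…,y_m ∈ B with m = ⌊q/6⌋ such that x_i is adjacent to y_j in HG_{p,q} if and only if i = j. -/

import Mathlib

open Classical in
/-- The cut matrix of `A`: rows indexed by `A`, columns by its complement, over GF(2),
with `(x,y)` entry `1` iff `x` and `y` are adjacent. -/
noncomputable def cutMatrix {V : Type*} [Fintype V] [DecidableEq V]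
    (G : SimpleGraph V) (A : Finset V) : Matrix ↥A ↥(Aᶜ) (ZMod 2) :=
  Matrix.of fun x y => if G.Adj x.1 y.1 then 1 else 0

/-- The cut-rank `ρ_G(A)`: the GF(2)-rank of the cut matrix of `A`. -/
noncomputable def cutRank {V : Type*} [Fintype V] [DecidableEq V]
    (G : SimpleGraph V) (A : Finset V) : ℕ :=
  (cutMatrix G A).rank

/-- The union-count `U_G(A)`: the number of distinct sets `N(Y) \ A` over `Y ⊆ A`. -/
noncomputable def unionCount {V : Type*} [Fintype V] [DecidableEq V]
    (G : SimpleGraph V) (A : Finset V) : ℕ :=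
  Set.ncard {S : Set V | ∃ Y : Set V, Y ⊆ ↑A ∧ (⋃ y ∈ Y, G.neighborSet y) \ ↑A = S}

/-- `nss_G(A)`: the number of distinct GF(2)-linear spans of subsets of rows of the
cut matrix of `A`. -/
noncomputable def nss {V : Type*} [Fintype V] [DecidableEq V]
    (G : SimpleGraph V) (A : Finset V) : ℕ :=
  Set.ncard {W : Submodule (ZMod 2) (↥(Aᶜ) → ZMod 2) |
    ∃ S : Set ↥A, W = Submodule.span (ZMod 2) ((fun x => cutMatrix G A x) '' S)}

/-- The Hsu-grid `HG_{p,q}` (0-indexed): vertex set `Fin p × Fin q` (`v_{i,j}` has row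
`i` and column `j`), with edges `v_{i,j} ~ v_{i+1,j}` (consecutive rows, same column)
and `v_{i,j} ~ v_{i',j+1}` for `i ≤ i'` (Hsu edges between consecutive columns). -/
def hsuGrid (p q : ℕ) : SimpleGraph (Fin p × Fin q) where
  Adj x y :=
    (x.2 = y.2 ∧ ((x.1 : ℕ) + 1 = (y.1 : ℕ) ∨ (y.1 : ℕ) + 1 = (x.1 : ℕ))) ∨
    ((x.2 : ℕ) + 1 = (y.2 : ℕ) ∧ (x.1 : ℕ) ≤ (y.1 : ℕ)) ∨
    ((y.2 : ℕ) + 1 = (x.2 : ℕ) ∧ (y.1 : ℕ) ≤ (x.1 : ℕ))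
  symm := by
    constructor
    rintro x y (⟨h1, h2⟩ | ⟨h1, h2⟩ | ⟨h1, h2⟩)
    · exact Or.inl ⟨h1.symm, h2.symm⟩
    · exact Or.inr (Or.inr ⟨h1, h2⟩)
    · exact Or.inr (Or.inl ⟨h1, h2⟩)
  loopless := by
    constructor
    rintro x (⟨-, h⟩ | ⟨h, -⟩ | ⟨h, -⟩) <;> omega

lemma hsu_adj_iff {p q : ℕ} (x y : Fin p × Fin q) :
    (hsuGrid p q).Adj x y ↔
    (x.2 = y.2 ∧ ((x.1 : ℕ) + 1 = (y.1 : ℕ) ∨ (y.1 : ℕ) + 1 = (x.1 : ℕ))) ∨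
    ((x.2 : ℕ) + 1 = (y.2 : ℕ) ∧ (x.1 : ℕ) ≤ (y.1 : ℕ)) ∨
    ((y.2 : ℕ) + 1 = (x.2 : ℕ) ∧ (y.1 : ℕ) ≤ (x.1 : ℕ)) := Iff.rfl

lemma rank_submatrix_le'' {K R C I : Type*} [Field K] [Fintype R] [Fintype C] [Fintype I]
    [DecidableEq R] [DecidableEq C]
    (M : Matrix R C K) (f : I → R) (g : I → C) :
    (M.submatrix f g).rank ≤ M.rank := by
  have h1 : M.submatrix f g
      = ((1 : Matrix R R K).submatrix f id) * M * ((1 : Matrix C C K).submatrix id g) := by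
    ext i j
    simp [Matrix.mul_apply, Matrix.one_apply, Finset.sum_ite_eq, Finset.sum_ite_eq',
      ite_and, Finset.mul_sum]
  rw [h1]
  exact le_trans (Matrix.rank_mul_le_left _ _) (Matrix.rank_mul_le_right _ _)

lemma cutRank_lower_bound {V : Type*} [Fintype V] [DecidableEq V]
    (G : SimpleGraph V) (A : Finset V) {n : ℕ} (r c : Fin n → V) (w : Fin n → ℕ)
    (hw : Function.Injective w)
    (hr : ∀ i, r i ∈ A) (hc : ∀ i, c i ∉ A)
    (hdiag : ∀ i, G.Adj (r i) (c i))
    (hzero : ∀ i j, w i < w j → ¬ G.Adj (r i) (c j)) :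
    n ≤ cutRank G A := by
  classical
  set M := cutMatrix G A with hM
  let r' : Fin n → ↥A := fun i => ⟨r i, hr i⟩
  let c' : Fin n → ↥(Aᶜ) := fun i => ⟨c i, Finset.mem_compl.mpr (hc i)⟩
  let σ := Tuple.sort w
  set N := M.submatrix (r' ∘ σ) (c' ∘ σ) with hN
  have hmono : StrictMono (w ∘ σ) :=
    (Tuple.monotone_sort w).strictMono_of_injective (hw.comp σ.injective)
  have hNdiag : ∀ i, N i i = 1 := by
    intro i
    simp only [hN, Matrix.submatrix_apply, Function.comp_apply, hM, cutMatrix, Matrix.of_apply]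
    exact if_pos (hdiag (σ i))
  have hupper : N.BlockTriangular OrderDual.toDual := by
    intro i j hij
    have hij' : (i : Fin n) < j := hij
    simp only [hN, Matrix.submatrix_apply, Function.comp_apply, hM, cutMatrix, Matrix.of_apply]
    exact if_neg (hzero _ _ (hmono hij'))
  have hdet : N.det = 1 := by
    rw [Matrix.det_of_lowerTriangular N hupper]
    simp [hNdiag]
  have hrank : N.rank = n := by
    rw [Matrix.rank_of_isUnit N
      ((Matrix.isUnit_iff_isUnit_det N).mpr (by rw [hdet]; exact isUnit_one))]
    simp
  calc n = N.rank := hrank.symm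
    _ ≤ M.rank := rank_submatrix_le'' M _ _

lemma exists_flip (f : ℕ → Prop) {a b : ℕ} (hab : a ≤ b) (ha : f a) (hb : ¬ f b) :
    ∃ t, a ≤ t ∧ t < b ∧ f t ∧ ¬ f (t + 1) := by
  by_contra h
  push_neg at h
  have key : ∀ t, a ≤ t → t ≤ b → f t := by
    intro t hat
    induction t, hat using Nat.le_induction with
    | base => intro _; exact ha
    | succ n hn ih => intro hnb; exact h n hn (by omega) (ih (by omega))
  exact hb (key b hab le_rfl)

/-- In a column containing both an `A`-vertex and a non-`A`-vertex, there is a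
crossing edge within the column. -/
lemma column_cross {p q : ℕ} (A : Finset (Fin p × Fin q)) (c : Fin q)
    (h1 : ∃ i : Fin p, (i, c) ∈ A) (h2 : ∃ i : Fin p, (i, c) ∉ A) :
    ∃ a b : Fin p, ((a : ℕ) + 1 = (b : ℕ) ∨ (b : ℕ) + 1 = (a : ℕ)) ∧
      (a, c) ∈ A ∧ (b, c) ∉ A := by
  obtain ⟨u, hu⟩ := h1
  obtain ⟨v, hv⟩ := h2
  rcases le_or_gt (u : ℕ) (v : ℕ) with huv | huv
  · obtain ⟨t, h1t, h2t, h3t, h4t⟩ :=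
      exists_flip (fun n => ∀ h : n < p, (⟨n, h⟩, c) ∈ A) huv
        (fun h => by simpa using hu) (fun hf => hv (by simpa using hf v.isLt))
    have htp : t + 1 < p := Nat.lt_of_le_of_lt h2t v.isLt
    have htp0 : t < p := Nat.lt_of_succ_lt htp
    have hbmem : (((⟨t + 1, htp⟩ : Fin p), c)) ∉ A := by
      intro hmem
      exact h4t (fun _ => hmem)
    exact ⟨⟨t, htp0⟩, ⟨t + 1, htp⟩, Or.inl rfl, h3t htp0, hbmem⟩
  · obtain ⟨t, h1t, h2t, h3t, h4t⟩ :=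
      exists_flip (fun n => ∀ h : n < p, (⟨n, h⟩, c) ∉ A) (le_of_lt huv)
        (fun h => by simpa using hv) (fun hf => (hf u.isLt) (by simpa using hu))
    have htp : t + 1 < p := Nat.lt_of_le_of_lt h2t u.isLt
    have htp0 : t < p := Nat.lt_of_succ_lt htp
    have hamem : (((⟨t + 1, htp⟩ : Fin p), c)) ∈ A := by
      by_contra hmem
      exact h4t (fun _ => hmem)
    exact ⟨⟨t + 1, htp⟩, ⟨t, htp0⟩, Or.inr rfl, hamem, h3t htp0⟩

/-- Many mixed columns give an induced matching. -/
lemma matching_of_many_mixed {p q : ℕ} (A : Finset (Fin p × Fin q))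
    (T : Finset (Fin q))
    (hTmem : ∀ j ∈ T, (∃ i : Fin p, (i, j) ∈ A) ∧ (∃ i : Fin p, (i, j) ∉ A))
    (hT : q ≤ 3 * T.card) :
    ∃ x y : Fin (q / 6) → Fin p × Fin q, Function.Injective x ∧ Function.Injective y ∧
      (∀ i, x i ∈ A) ∧ (∀ i, y i ∉ A) ∧
      (∀ i j, (hsuGrid p q).Adj (x i) (y j) ↔ i = j) := by
  classical
  set k := q / 6 with hk
  have h2k : 2 * k ≤ T.card := by omega
  let e := T.orderIsoOfFin rfl
  let col : Fin k → Fin q := fun i => (e ⟨2 * i.val, by omega⟩ : Fin q)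
  have hgap : ∀ i j : Fin k, i < j → (col i : ℕ) + 2 ≤ (col j : ℕ) := by
    intro i j hij
    have hij' : (2 * i.val) < 2 * j.val := by
      have := Fin.lt_def.mp hij; omega
    have h1 : e ⟨2 * i.val, by omega⟩ < e ⟨2 * i.val + 1, by omega⟩ :=
      e.strictMono (by simp [Fin.lt_def])
    have h2 : e ⟨2 * i.val + 1, by omega⟩ < e ⟨2 * j.val, by omega⟩ :=
      e.strictMono (by simp [Fin.lt_def]; omega)
    have v1 : ((e ⟨2 * i.val, by omega⟩ : Fin q) : ℕ) < ((e ⟨2 * i.val + 1, by omega⟩ : Fin q) : ℕ) := h1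
    have v2 : ((e ⟨2 * i.val + 1, by omega⟩ : Fin q) : ℕ) < ((e ⟨2 * j.val, by omega⟩ : Fin q) : ℕ) := h2
    simp only [col]
    omega
  have hcolT : ∀ i : Fin k, (col i) ∈ T := fun i => (e _).2
  have hcross : ∀ i : Fin k, ∃ a b : Fin p,
      ((a : ℕ) + 1 = (b : ℕ) ∨ (b : ℕ) + 1 = (a : ℕ)) ∧ (a, col i) ∈ A ∧ (b, col i) ∉ A := by
    intro i
    exact column_cross A (col i) (hTmem _ (hcolT i)).1 (hTmem _ (hcolT i)).2
  choose a b hab haA hbB using hcross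
  have hcolinj : ∀ i j : Fin k, col i = col j → i = j := by
    intro i j hcij
    by_contra hne
    rcases lt_or_gt_of_ne hne with h | h
    · have := hgap i j h; rw [hcij] at this; omega
    · have := hgap j i h; rw [hcij] at this; omega
  refine ⟨fun i => (a i, col i), fun i => (b i, col i), ?_, ?_, fun i => haA i, fun i => hbB i, ?_⟩
  · intro i j hxy
    exact hcolinj i j (congrArg Prod.snd hxy)
  · intro i j hxy
    exact hcolinj i j (congrArg Prod.snd hxy)
  · intro i j
    constructor
    · intro hadj
      by_contra hne
      rw [hsu_adj_iff] at hadj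
      have hcols : (col i : ℕ) + 2 ≤ (col j : ℕ) ∨ (col j : ℕ) + 2 ≤ (col i : ℕ) := by
        rcases lt_or_gt_of_ne hne with h | h
        · exact Or.inl (hgap i j h)
        · exact Or.inr (hgap j i h)
      rcases hadj with ⟨h1, -⟩ | ⟨h1, -⟩ | ⟨h1, -⟩
      · have : (col i : ℕ) = (col j : ℕ) := congrArg Fin.val h1
        omega
      · simp only at h1; omega
      · simp only at h1; omega
    · rintro rfl
      rw [hsu_adj_iff]
      exact Or.inl ⟨rfl, hab i⟩

/-- Counting lemma: if the column of every vertex of `S` lies in `T`,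
then `S.card ≤ p * T.card`. -/
lemma card_le_of_cols {p q : ℕ} (S : Finset (Fin p × Fin q)) (T : Finset (Fin q))
    (h : ∀ v ∈ S, v.2 ∈ T) : S.card ≤ p * T.card := by
  classical
  apply Finset.card_le_mul_card_image_of_maps_to h
  intro c _
  calc (S.filter (fun v => v.2 = c)).card
      ≤ (Finset.univ.map ⟨fun i : Fin p => (i, c), fun i j hij => (Prod.mk.injEq _ _ _ _ ▸ hij).1⟩).card := by
        apply Finset.card_le_card
        intro v hv
        simp only [Finset.mem_filter] at hv
        simp only [Finset.mem_map, Finset.mem_univ, Function.Embedding.coeFn_mk, true_and]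
        exact ⟨v.1, by rw [← hv.2]; rfl⟩
    _ = p := by simp

/-- for `p, q ≥ 2` and any balanced cut `{A, B}` of the Hsu-grid
`HG_{p,q}` (both sides of size at least `pq/3`), either the cut-rank of `A` is at
least `⌊p/4⌋`, or there is an induced matching of size `⌊q/6⌋` across the cut:
distinct `x_1,…,x_m ∈ A` and `y_1,…,y_m ∈ B` with `m = ⌊q/6⌋` such that `x_i` is
adjacent to `y_j` iff `i = j`. -/
theorem hsuGrid_balanced_cut (p q : ℕ) (hp : 2 ≤ p) (hq : 2 ≤ q)
    (A : Finset (Fin p × Fin q))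
    (hbal₁ : p * q ≤ 3 * A.card) (hbal₂ : 3 * A.card ≤ 2 * (p * q)) :
    p / 4 ≤ cutRank (hsuGrid p q) A ∨
    ∃ x y : Fin (q / 6) → Fin p × Fin q,
      Function.Injective x ∧ Function.Injective y ∧
      (∀ i, x i ∈ A) ∧ (∀ i, y i ∉ A) ∧
      (∀ i j, (hsuGrid p q).Adj (x i) (y j) ↔ i = j) := by
  classical
  set T : Finset (Fin q) :=
    Finset.univ.filter (fun j : Fin q => (∃ i : Fin p, (i, j) ∈ A) ∧ (∃ i : Fin p, (i, j) ∉ A))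
    with hT
  have hTmem : ∀ j ∈ T, (∃ i : Fin p, (i, j) ∈ A) ∧ (∃ i : Fin p, (i, j) ∉ A) := by
    intro j hj
    exact (Finset.mem_filter.mp hj).2
  by_cases hA1 : ∃ jA : Fin q, ∀ i : Fin p, (i, jA) ∈ A
  · by_cases hB1 : ∃ jB : Fin q, ∀ i : Fin p, (i, jB) ∉ A
    · -- rank case
      left
      obtain ⟨jA, hjA⟩ := hA1
      obtain ⟨jB, hjB⟩ := hB1
      have hne : (jA : ℕ) ≠ (jB : ℕ) := by
        intro hc
        have : jA = jB := Fin.ext hc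
        subst this
        exact hjB ⟨0, by omega⟩ (hjA ⟨0, by omega⟩)
      have hmain : p ≤ cutRank (hsuGrid p q) A := by
        rcases lt_or_gt_of_ne hne with hlt | hgt
        · -- jA < jB : A-column to the left
          have hstep : ∀ i : Fin p, ∃ t : ℕ, ∃ h1 : t < q, ∃ h2 : t + 1 < q,
              (jA : ℕ) ≤ t ∧ t < (jB : ℕ) ∧ (i, (⟨t, h1⟩ : Fin q)) ∈ A ∧
              (i, (⟨t + 1, h2⟩ : Fin q)) ∉ A := by
            intro i
            obtain ⟨t, h1t, h2t, h3t, h4t⟩ :=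
              exists_flip (fun n => ∀ h : n < q, (i, (⟨n, h⟩ : Fin q)) ∈ A) (le_of_lt hlt)
                (fun h => by simpa using hjA i) (fun hf => hjB i (by simpa using hf jB.isLt))
            have hq2 : t + 1 < q := Nat.lt_of_le_of_lt h2t jB.isLt
            have hq1 : t < q := Nat.lt_of_succ_lt hq2
            exact ⟨t, hq1, hq2, h1t, h2t, h3t hq1, fun hmem => h4t (fun _ => hmem)⟩
          choose J hJ1 hJ2 hJab using hstep
          apply cutRank_lower_bound (hsuGrid p q) A
            (fun i => (i, (⟨J i, hJ1 i⟩ : Fin q)))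
            (fun i => (i, (⟨J i + 1, hJ2 i⟩ : Fin q)))
            (fun i => (p - 1 - (i : ℕ)) + J i * p)
          · -- injective
            intro i i' he
            have m1 : ((p - 1 - (i : ℕ)) + J i * p) % p = p - 1 - (i : ℕ) := by
              rw [Nat.add_mul_mod_self_right]
              exact Nat.mod_eq_of_lt (by have := i.isLt; omega)
            have m2 : ((p - 1 - (i' : ℕ)) + J i' * p) % p = p - 1 - (i' : ℕ) := by
              rw [Nat.add_mul_mod_self_right]
              exact Nat.mod_eq_of_lt (by have := i'.isLt; omega)
            have he' : (p - 1 - (i : ℕ)) + J i * p = (p - 1 - (i' : ℕ)) + J i' * p := he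
            have : p - 1 - (i : ℕ) = p - 1 - (i' : ℕ) := by rw [← m1, ← m2, he']
            have hii : (i : ℕ) = (i' : ℕ) := by have := i.isLt; have := i'.isLt; omega
            exact Fin.ext hii
          · intro i; exact (hJab i).2.2.1
          · intro i; exact (hJab i).2.2.2
          · intro i
            rw [hsu_adj_iff]
            exact Or.inr (Or.inl ⟨rfl, le_rfl⟩)
          · intro i i' hw hadj
            rw [hsu_adj_iff] at hadj
            have hi : (i : ℕ) < p := i.isLt
            have hi' : (i' : ℕ) < p := i'.isLt
            have hJlt : ∀ a a' : Fin p, J a' < J a →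
                (p - 1 - (a' : ℕ)) + J a' * p < (p - 1 - (a : ℕ)) + J a * p := by
              intro a a' hJJ
              have e1 : (J a' + 1) * p = J a' * p + p := by ring
              have e2 : (J a' + 1) * p ≤ J a * p := Nat.mul_le_mul_right _ (by omega)
              have := a.isLt; have := a'.isLt
              omega
            rcases hadj with ⟨h1, -⟩ | ⟨h1, h2⟩ | ⟨h1, -⟩
            · have hv : J i = J i' + 1 := congrArg Fin.val h1
              have := hJlt i i' (by omega)
              omega
            · simp only at h1 h2
              have hv : J i = J i' := by omega
              rw [hv] at hw
              omega
            · simp only at h1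
              have := hJlt i i' (by omega)
              omega
        · -- jB < jA : B-column to the left
          have hqJ : (jA : ℕ) < q := jA.isLt
          have hstep : ∀ i : Fin p, ∃ t : ℕ, ∃ h1 : t < q, ∃ h2 : t + 1 < q,
              (jB : ℕ) ≤ t ∧ t < (jA : ℕ) ∧ (i, (⟨t, h1⟩ : Fin q)) ∉ A ∧
              (i, (⟨t + 1, h2⟩ : Fin q)) ∈ A := by
            intro i
            obtain ⟨t, h1t, h2t, h3t, h4t⟩ :=
              exists_flip (fun n => ∀ h : n < q, (i, (⟨n, h⟩ : Fin q)) ∉ A) (le_of_lt hgt)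
                (fun h => by simpa using hjB i) (fun hf => (hf jA.isLt) (by simpa using hjA i))
            have hq2 : t + 1 < q := Nat.lt_of_le_of_lt h2t jA.isLt
            have hq1 : t < q := Nat.lt_of_succ_lt hq2
            refine ⟨t, hq1, hq2, h1t, h2t, h3t hq1, ?_⟩
            by_contra hmem
            exact h4t (fun _ => hmem)
          choose J hJ1 hJ2 hJab using hstep
          apply cutRank_lower_bound (hsuGrid p q) A
            (fun i => (i, (⟨J i + 1, hJ2 i⟩ : Fin q)))
            (fun i => (i, (⟨J i, hJ1 i⟩ : Fin q)))
            (fun i => (i : ℕ) + (q - J i) * p)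
          · intro i i' he
            have m1 : ((i : ℕ) + (q - J i) * p) % p = (i : ℕ) := by
              rw [Nat.add_mul_mod_self_right]
              exact Nat.mod_eq_of_lt i.isLt
            have m2 : ((i' : ℕ) + (q - J i') * p) % p = (i' : ℕ) := by
              rw [Nat.add_mul_mod_self_right]
              exact Nat.mod_eq_of_lt i'.isLt
            have he' : (i : ℕ) + (q - J i) * p = (i' : ℕ) + (q - J i') * p := he
            have hii : (i : ℕ) = (i' : ℕ) := by rw [← m1, ← m2, he']
            exact Fin.ext hii
          · intro i; exact (hJab i).2.2.2
          · intro i; exact (hJab i).2.2.1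
          · intro i
            rw [hsu_adj_iff]
            exact Or.inr (Or.inr ⟨rfl, le_rfl⟩)
          · intro i i' hw hadj
            rw [hsu_adj_iff] at hadj
            have hi : (i : ℕ) < p := i.isLt
            have hi' : (i' : ℕ) < p := i'.isLt
            have hJq : J i < q := by have := (hJab i).2.1; omega
            have hJq' : J i' < q := by have := (hJab i').2.1; omega
            have hJlt : J i < J i' →
                (i' : ℕ) + (q - J i') * p < (i : ℕ) + (q - J i) * p := by
              intro hJJ
              have e1 : (q - J i' + 1) * p = (q - J i') * p + p := by ring
              have e2 : (q - J i' + 1) * p ≤ (q - J i) * p :=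
                Nat.mul_le_mul_right _ (by omega)
              omega
            rcases hadj with ⟨h1, -⟩ | ⟨h1, -⟩ | ⟨h1, h2⟩
            · have hv : J i + 1 = J i' := congrArg Fin.val h1
              have := hJlt (by omega)
              omega
            · simp only at h1
              have := hJlt (by omega)
              omega
            · simp only at h1 h2
              have hv : J i' = J i := by omega
              rw [hv] at hw
              omega
      calc p / 4 ≤ p := Nat.div_le_self p 4
        _ ≤ _ := hmain
    · -- no full-B column: every column has an A-vertex
      right
      push_neg at hB1
      apply matching_of_many_mixed A T hTmem
      have hcard : (Finset.univ \ A).card ≤ p * T.card := by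
        apply card_le_of_cols
        intro v hv
        rw [hT, Finset.mem_filter]
        refine ⟨Finset.mem_univ _, ⟨?_, ⟨v.1, ?_⟩⟩⟩
        · obtain ⟨i, hi⟩ := hB1 v.2
          exact ⟨i, hi⟩
        · have := Finset.mem_sdiff.mp hv
          rw [Prod.mk.eta]
          exact this.2
      have hAle : A.card ≤ p * q := by
        calc A.card ≤ Fintype.card (Fin p × Fin q) := Finset.card_le_univ A
          _ = p * q := by simp
      have hdiff : (Finset.univ \ A).card = p * q - A.card := by
        rw [Finset.card_sdiff_of_subset (Finset.subset_univ A)]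
        simp
      have h3S : p * q ≤ 3 * (Finset.univ \ A).card := by omega
      have : p * q ≤ p * (3 * T.card) := by
        calc p * q ≤ 3 * (Finset.univ \ A).card := h3S
          _ ≤ 3 * (p * T.card) := by omega
          _ = p * (3 * T.card) := by ring
      exact Nat.le_of_mul_le_mul_left this (by omega)
  · -- no full-A column: every column has a non-A vertex
    right
    push_neg at hA1
    apply matching_of_many_mixed A T hTmem
    have hcard : A.card ≤ p * T.card := by
      apply card_le_of_cols
      intro v hv
      rw [hT, Finset.mem_filter]
      refine ⟨Finset.mem_univ _, ⟨⟨v.1, by rw [Prod.mk.eta]; exact hv⟩, ?_⟩⟩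
      obtain ⟨i, hi⟩ := hA1 v.2
      exact ⟨i, hi⟩
    have : p * q ≤ p * (3 * T.card) := by
      calc p * q ≤ 3 * A.card := hbal₁
        _ ≤ 3 * (p * T.card) := by omega
        _ = p * (3 * T.card) := by ring
    exact Nat.le_of_mul_le_mul_left this (by omega)
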